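/- arXiv:1806.05585 — 2 statements merged into one kernel-verified Lean document; each statement's English description precedes it below -/
import Mathlib

section
/- Suppose f, g : ℕ → ℝ are eventually nonnegative functions with f(k) = Θ(k^{a−1}) and g(k) = Θ(k^{b−1}) for positive integers a, b. Then the convolution h(k) = Σ_{ℓ=0}^{k} f(ℓ)·g(k−ℓ) satisfies h(k) = Θ(k^{a+b−1}). -/
open Filter

/-- `f = Θ(g)` at infinity: there are constants `c, C > 0` with
`c·g(k) ≤ f(k) ≤ C·g(k)` for all sufficiently large `k`. -/
def BigTheta (f g : ℕ → ℝ) : Prop :=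
  ∃ c C : ℝ, 0 < c ∧ 0 < C ∧ ∀ᶠ k in atTop, c * g k ≤ f k ∧ f k ≤ C * g k

set_option maxHeartbeats 1000000 in
/-- If `f(k) = Θ(k^(a-1))` and `g(k) = Θ(k^(b-1))` with `a, b` positive integers and
`f, g` eventually nonnegative, then the convolution
`h(k) = ∑_{ℓ=0}^k f(ℓ)·g(k-ℓ)` satisfies `h(k) = Θ(k^(a+b-1))`. -/
theorem bigTheta_convolution (f g : ℕ → ℝ) (a b : ℕ) (ha : 0 < a) (hb : 0 < b)
    (hf0 : ∀ᶠ k in atTop, 0 ≤ f k) (hg0 : ∀ᶠ k in atTop, 0 ≤ g k)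
    (hf : BigTheta f fun k => (k : ℝ) ^ (a - 1))
    (hg : BigTheta g fun k => (k : ℝ) ^ (b - 1)) :
    BigTheta (fun k => ∑ ℓ ∈ Finset.range (k + 1), f ℓ * g (k - ℓ))
      (fun k => (k : ℝ) ^ (a + b - 1)) := by
  obtain ⟨a', rfl⟩ : ∃ a', a = a' + 1 := ⟨a - 1, by omega⟩
  obtain ⟨b', rfl⟩ : ∃ b', b = b' + 1 := ⟨b - 1, by omega⟩
  simp only [Nat.add_sub_cancel] at hf hg
  simp only [show a' + 1 + (b' + 1) - 1 = a' + b' + 1 from by omega]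
  set n := a' + b' with hn
  obtain ⟨c1, C1, hc1, hC1, hf'⟩ := hf
  obtain ⟨c2, C2, hc2, hC2, hg'⟩ := hg
  obtain ⟨N₀, hN₀⟩ := eventually_atTop.1 ((hf0.and hg0).and (hf'.and hg'))
  set N := N₀ + 1 with hNdef
  have hN : ∀ k, N ≤ k → (0 ≤ f k ∧ 0 ≤ g k) ∧
      ((c1 * (k : ℝ) ^ a' ≤ f k ∧ f k ≤ C1 * (k : ℝ) ^ a') ∧
        (c2 * (k : ℝ) ^ b' ≤ g k ∧ g k ≤ C2 * (k : ℝ) ^ b')) :=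
    fun k hk => hN₀ k (by omega)
  set M := ∑ j ∈ Finset.range N, (|f j| + |g j|) with hM
  have hM0 : 0 ≤ M := Finset.sum_nonneg fun j _ => by positivity
  have hfM : ∀ ℓ, ℓ < N → |f ℓ| ≤ M ∧ |g ℓ| ≤ M := by
    intro ℓ hℓ
    have h1 : |f ℓ| + |g ℓ| ≤ M :=
      Finset.single_le_sum (f := fun j => |f j| + |g j|) (fun j _ => by positivity)
        (Finset.mem_range.2 hℓ)
    constructor
    · linarith [abs_nonneg (g ℓ)]
    · linarith [abs_nonneg (f ℓ)]
  set K := (M + C1 + 1) * (M + C2 + 1) with hK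
  have hK0 : 0 < K := by positivity
  have hMC1 : M * C2 ≤ K := by rw [hK]; nlinarith
  have hMC2 : C1 * M ≤ K := by rw [hK]; nlinarith
  have hMC3 : C1 * C2 ≤ K := by rw [hK]; nlinarith
  -- key pointwise bound on terms
  have key : ∀ k, 2 * N ≤ k → ∀ ℓ, ℓ ≤ k → |f ℓ * g (k - ℓ)| ≤ K * (k : ℝ) ^ n := by
    intro k hk ℓ hℓ
    have hk1 : (1 : ℝ) ≤ (k : ℝ) := by exact_mod_cast (by omega : 1 ≤ k)
    have hk0 : (0 : ℝ) ≤ (k : ℝ) := by linarith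
    have hkn0 : (0 : ℝ) ≤ (k : ℝ) ^ n := by positivity
    have castpow : ∀ j : ℕ, j ≤ k → ∀ m : ℕ, ((j : ℝ)) ^ m ≤ (k : ℝ) ^ m := by
      intro j hj m
      exact pow_le_pow_left₀ (by positivity) (by exact_mod_cast hj) m
    have powmono : ∀ m : ℕ, m ≤ n → (k : ℝ) ^ m ≤ (k : ℝ) ^ n := fun m hm =>
      pow_le_pow_right₀ hk1 hm
    rw [abs_mul]
    rcases lt_or_ge ℓ N with hℓN | hℓN
    · -- small ℓ
      have hkℓ : N ≤ k - ℓ := by omega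
      have hg1 := hN _ hkℓ
      have hgb : |g (k - ℓ)| ≤ C2 * (k : ℝ) ^ n := by
        rw [abs_of_nonneg hg1.1.2]
        calc g (k - ℓ) ≤ C2 * ((k - ℓ : ℕ) : ℝ) ^ b' := hg1.2.2.2
          _ ≤ C2 * (k : ℝ) ^ b' :=
              mul_le_mul_of_nonneg_left (castpow (k - ℓ) (by omega) b') hC2.le
          _ ≤ C2 * (k : ℝ) ^ n :=
              mul_le_mul_of_nonneg_left (powmono b' (by omega)) hC2.le
      calc |f ℓ| * |g (k - ℓ)| ≤ M * (C2 * (k : ℝ) ^ n) :=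
            mul_le_mul (hfM ℓ hℓN).1 hgb (abs_nonneg _) hM0
        _ = (M * C2) * (k : ℝ) ^ n := by ring
        _ ≤ K * (k : ℝ) ^ n := mul_le_mul_of_nonneg_right hMC1 hkn0
    rcases lt_or_ge (k - ℓ) N with hkℓ | hkℓ
    · -- small k - ℓ
      have hf1 := hN ℓ hℓN
      have hfb : |f ℓ| ≤ C1 * (k : ℝ) ^ n := by
        rw [abs_of_nonneg hf1.1.1]
        calc f ℓ ≤ C1 * (ℓ : ℝ) ^ a' := hf1.2.1.2
          _ ≤ C1 * (k : ℝ) ^ a' :=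
              mul_le_mul_of_nonneg_left (castpow ℓ hℓ a') hC1.le
          _ ≤ C1 * (k : ℝ) ^ n :=
              mul_le_mul_of_nonneg_left (powmono a' (by omega)) hC1.le
      calc |f ℓ| * |g (k - ℓ)| ≤ (C1 * (k : ℝ) ^ n) * M :=
            mul_le_mul hfb (hfM _ hkℓ).2 (abs_nonneg _) (by positivity)
        _ = (C1 * M) * (k : ℝ) ^ n := by ring
        _ ≤ K * (k : ℝ) ^ n := mul_le_mul_of_nonneg_right hMC2 hkn0
    · -- both large
      have hf1 := hN ℓ hℓN
      have hg1 := hN _ hkℓ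
      have hfb : |f ℓ| ≤ C1 * (k : ℝ) ^ a' := by
        rw [abs_of_nonneg hf1.1.1]
        calc f ℓ ≤ C1 * (ℓ : ℝ) ^ a' := hf1.2.1.2
          _ ≤ C1 * (k : ℝ) ^ a' :=
              mul_le_mul_of_nonneg_left (castpow ℓ hℓ a') hC1.le
      have hgb : |g (k - ℓ)| ≤ C2 * (k : ℝ) ^ b' := by
        rw [abs_of_nonneg hg1.1.2]
        calc g (k - ℓ) ≤ C2 * ((k - ℓ : ℕ) : ℝ) ^ b' := hg1.2.2.2
          _ ≤ C2 * (k : ℝ) ^ b' :=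
              mul_le_mul_of_nonneg_left (castpow (k - ℓ) (by omega) b') hC2.le
      calc |f ℓ| * |g (k - ℓ)| ≤ (C1 * (k : ℝ) ^ a') * (C2 * (k : ℝ) ^ b') :=
            mul_le_mul hfb hgb (abs_nonneg _) (by positivity)
        _ = (C1 * C2) * (k : ℝ) ^ n := by rw [hn, pow_add]; ring
        _ ≤ K * (k : ℝ) ^ n := mul_le_mul_of_nonneg_right hMC3 hkn0
  -- upper bound
  have upper : ∀ k, 2 * N ≤ k →
      (∑ ℓ ∈ Finset.range (k + 1), f ℓ * g (k - ℓ)) ≤ 2 * K * (k : ℝ) ^ (n + 1) := by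
    intro k hk
    have hk1 : (1 : ℝ) ≤ (k : ℝ) := by exact_mod_cast (by omega : 1 ≤ k)
    have hkn0 : (0 : ℝ) ≤ (k : ℝ) ^ n := by positivity
    calc (∑ ℓ ∈ Finset.range (k + 1), f ℓ * g (k - ℓ))
        ≤ ∑ ℓ ∈ Finset.range (k + 1), |f ℓ * g (k - ℓ)| :=
          Finset.sum_le_sum fun ℓ _ => le_abs_self _
      _ ≤ ∑ _ℓ ∈ Finset.range (k + 1), K * (k : ℝ) ^ n :=
          Finset.sum_le_sum fun ℓ hℓ =>
            key k hk ℓ (Nat.lt_succ_iff.1 (Finset.mem_range.1 hℓ))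
      _ = ((k + 1 : ℕ) : ℝ) * (K * (k : ℝ) ^ n) := by
          rw [Finset.sum_const, Finset.card_range, nsmul_eq_mul]
      _ ≤ (2 * (k : ℝ)) * (K * (k : ℝ) ^ n) := by
          have h2k : ((k + 1 : ℕ) : ℝ) ≤ 2 * (k : ℝ) := by push_cast; linarith
          exact mul_le_mul_of_nonneg_right h2k (by positivity)
      _ = 2 * K * (k : ℝ) ^ (n + 1) := by rw [pow_succ]; ring
  -- middle lower bound
  have middle : ∀ k, 8 * N ≤ k →
      c1 * c2 / 8 ^ (n + 1) * (k : ℝ) ^ (n + 1) ≤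
        ∑ ℓ ∈ Finset.Ico (k / 4) (k / 2), f ℓ * g (k - ℓ) := by
    intro k hk
    have hk8 : 8 ≤ k := by omega
    have h8a : (k : ℝ) ≤ 8 * ((k / 4 : ℕ) : ℝ) := by exact_mod_cast (by omega : k ≤ 8 * (k / 4))
    have h8b : (k : ℝ) ≤ 8 * ((k / 2 - k / 4 : ℕ) : ℝ) := by
      exact_mod_cast (by omega : k ≤ 8 * (k / 2 - k / 4))
    have hterm : ∀ ℓ ∈ Finset.Ico (k / 4) (k / 2),
        c1 * c2 * ((k / 4 : ℕ) : ℝ) ^ n ≤ f ℓ * g (k - ℓ) := by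
      intro ℓ hℓ
      obtain ⟨h1, h2⟩ := Finset.mem_Ico.1 hℓ
      have hℓN : N ≤ ℓ := by omega
      have hkℓN : N ≤ k - ℓ := by omega
      have hq2 : (k / 4 : ℕ) ≤ k - ℓ := by omega
      have hf1 := hN ℓ hℓN
      have hg1 := hN _ hkℓN
      have hfl : c1 * ((k / 4 : ℕ) : ℝ) ^ a' ≤ f ℓ := by
        calc c1 * ((k / 4 : ℕ) : ℝ) ^ a' ≤ c1 * (ℓ : ℝ) ^ a' := by
              have : ((k / 4 : ℕ) : ℝ) ^ a' ≤ (ℓ : ℝ) ^ a' :=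
                pow_le_pow_left₀ (by positivity) (by exact_mod_cast h1) a'
              exact mul_le_mul_of_nonneg_left this hc1.le
          _ ≤ f ℓ := hf1.2.1.1
      have hgl : c2 * ((k / 4 : ℕ) : ℝ) ^ b' ≤ g (k - ℓ) := by
        calc c2 * ((k / 4 : ℕ) : ℝ) ^ b' ≤ c2 * ((k - ℓ : ℕ) : ℝ) ^ b' := by
              have : ((k / 4 : ℕ) : ℝ) ^ b' ≤ ((k - ℓ : ℕ) : ℝ) ^ b' :=
                pow_le_pow_left₀ (by positivity) (by exact_mod_cast hq2) b'
              exact mul_le_mul_of_nonneg_left this hc2.le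
          _ ≤ g (k - ℓ) := hg1.2.2.1
      calc c1 * c2 * ((k / 4 : ℕ) : ℝ) ^ n
          = (c1 * ((k / 4 : ℕ) : ℝ) ^ a') * (c2 * ((k / 4 : ℕ) : ℝ) ^ b') := by
            rw [hn, pow_add]; ring
        _ ≤ f ℓ * g (k - ℓ) := by
            apply mul_le_mul hfl hgl (by positivity)
            exact le_trans (by positivity) hfl
    have hcount : (∑ ℓ ∈ Finset.Ico (k / 4) (k / 2),
        (c1 * c2 * ((k / 4 : ℕ) : ℝ) ^ n)) ≤ ∑ ℓ ∈ Finset.Ico (k / 4) (k / 2), f ℓ * g (k - ℓ) :=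
      Finset.sum_le_sum hterm
    rw [Finset.sum_const, Nat.card_Ico, nsmul_eq_mul] at hcount
    refine le_trans ?_ hcount
    have hx : (k : ℝ) / 8 ≤ ((k / 4 : ℕ) : ℝ) := by linarith
    have hy : (k : ℝ) / 8 ≤ ((k / 2 - k / 4 : ℕ) : ℝ) := by linarith
    have hx0 : (0 : ℝ) ≤ (k : ℝ) / 8 := by positivity
    have hpow : ((k : ℝ) / 8) ^ n ≤ ((k / 4 : ℕ) : ℝ) ^ n := pow_le_pow_left₀ hx0 hx n
    calc c1 * c2 / 8 ^ (n + 1) * (k : ℝ) ^ (n + 1)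
        = ((k : ℝ) / 8) * (c1 * c2 * ((k : ℝ) / 8) ^ n) := by
          rw [pow_succ, div_pow]
          field_simp
          ring
      _ ≤ ((k : ℝ) / 8) * (c1 * c2 * ((k / 4 : ℕ) : ℝ) ^ n) :=
          mul_le_mul_of_nonneg_left (mul_le_mul_of_nonneg_left hpow (by positivity)) hx0
      _ ≤ ((k / 2 - k / 4 : ℕ) : ℝ) * (c1 * c2 * ((k / 4 : ℕ) : ℝ) ^ n) := by
          have hpos : (0 : ℝ) ≤ c1 * c2 * ((k / 4 : ℕ) : ℝ) ^ n := by positivity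
          exact mul_le_mul_of_nonneg_right hy hpos
  -- lower split
  have split : ∀ k, 8 * N ≤ k →
      (∑ ℓ ∈ Finset.Ico (k / 4) (k / 2), f ℓ * g (k - ℓ)) - 2 * N * (K * (k : ℝ) ^ n) ≤
        ∑ ℓ ∈ Finset.range (k + 1), f ℓ * g (k - ℓ) := by
    intro k hk
    have hsub : Finset.Ico (k / 4) (k / 2) ⊆ Finset.range (k + 1) := by
      intro ℓ hℓ
      rw [Finset.mem_range]
      have := (Finset.mem_Ico.1 hℓ).2
      omega
    rw [← Finset.sum_sdiff hsub]
    have hkn0 : (0 : ℝ) ≤ (k : ℝ) ^ n := by positivity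
    have hrest : -(2 * N * (K * (k : ℝ) ^ n)) ≤
        ∑ ℓ ∈ Finset.range (k + 1) \ Finset.Ico (k / 4) (k / 2), f ℓ * g (k - ℓ) := by
      set D := Finset.range (k + 1) \ Finset.Ico (k / 4) (k / 2) with hD
      have hcard : (D.filter (fun ℓ => ℓ < N ∨ k - ℓ < N)).card ≤ 2 * N := by
        have hss : D.filter (fun ℓ => ℓ < N ∨ k - ℓ < N) ⊆
            Finset.range N ∪ Finset.Ioc (k - N) k := by
          intro ℓ hℓ
          simp only [Finset.mem_filter, hD, Finset.mem_sdiff, Finset.mem_range] at hℓ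
          rcases hℓ.2 with h | h
          · exact Finset.mem_union_left _ (Finset.mem_range.2 h)
          · exact Finset.mem_union_right _ (Finset.mem_Ioc.2 ⟨by omega, by omega⟩)
        calc (D.filter (fun ℓ => ℓ < N ∨ k - ℓ < N)).card
            ≤ (Finset.range N ∪ Finset.Ioc (k - N) k).card := Finset.card_le_card hss
          _ ≤ (Finset.range N).card + (Finset.Ioc (k - N) k).card := Finset.card_union_le _ _
          _ ≤ 2 * N := by rw [Finset.card_range, Nat.card_Ioc]; omega
      rw [← Finset.sum_filter_add_sum_filter_not D (fun ℓ => ℓ < N ∨ k - ℓ < N)]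
      have h1 : -(2 * N * (K * (k : ℝ) ^ n)) ≤
          ∑ ℓ ∈ D.filter (fun ℓ => ℓ < N ∨ k - ℓ < N), f ℓ * g (k - ℓ) := by
        have hterm : ∀ ℓ ∈ D.filter (fun ℓ => ℓ < N ∨ k - ℓ < N),
            -(K * (k : ℝ) ^ n) ≤ f ℓ * g (k - ℓ) := by
          intro ℓ hℓ
          have hℓk : ℓ ≤ k := by
            have := (Finset.mem_sdiff.1 (Finset.mem_filter.1 hℓ).1).1
            rw [Finset.mem_range] at this
            omega
          exact (abs_le.1 (key k (by omega) ℓ hℓk)).1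
        calc -(2 * N * (K * (k : ℝ) ^ n))
            ≤ -(((D.filter (fun ℓ => ℓ < N ∨ k - ℓ < N)).card : ℝ) * (K * (k : ℝ) ^ n)) := by
              have hc : ((D.filter (fun ℓ => ℓ < N ∨ k - ℓ < N)).card : ℝ) ≤ 2 * N := by
                exact_mod_cast hcard
              have hKk : (0 : ℝ) ≤ K * (k : ℝ) ^ n := by positivity
              exact neg_le_neg (mul_le_mul_of_nonneg_right hc hKk)
          _ = ∑ ℓ ∈ D.filter (fun ℓ => ℓ < N ∨ k - ℓ < N), -(K * (k : ℝ) ^ n) := by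
              rw [Finset.sum_const, nsmul_eq_mul]; ring
          _ ≤ _ := Finset.sum_le_sum hterm
      have h2 : (0 : ℝ) ≤ ∑ ℓ ∈ D.filter (fun ℓ => ¬(ℓ < N ∨ k - ℓ < N)), f ℓ * g (k - ℓ) := by
        apply Finset.sum_nonneg
        intro ℓ hℓ
        have hp := (Finset.mem_filter.1 hℓ).2
        push_neg at hp
        exact mul_nonneg (hN ℓ hp.1).1.1 (hN _ hp.2).1.2
      linarith
    linarith
  -- conclusion
  refine ⟨c1 * c2 / 8 ^ (n + 1) / 2, 2 * K, by positivity, by positivity, ?_⟩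
  rw [eventually_atTop]
  set c' := c1 * c2 / 8 ^ (n + 1) with hc'
  have hc'0 : 0 < c' := by positivity
  refine ⟨max (8 * N) (⌈4 * N * K / c'⌉₊ + 1), fun k hk => ?_⟩
  have hk8 : 8 * N ≤ k := le_trans (le_max_left _ _) hk
  have hkc : 4 * N * K / c' ≤ (k : ℝ) := by
    have h1 : (⌈4 * N * K / c'⌉₊ : ℝ) ≤ (k : ℝ) := by
      exact_mod_cast le_trans (by omega : ⌈4 * N * K / c'⌉₊ ≤ max (8 * N) (⌈4 * N * K / c'⌉₊ + 1)) hk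
    exact le_trans (Nat.le_ceil _) h1
  have hkN2 : 2 * N ≤ k := by omega
  have hkn0 : (0 : ℝ) ≤ (k : ℝ) ^ n := by positivity
  have hkK : 2 * N * K ≤ c' / 2 * (k : ℝ) := by
    rw [div_le_iff₀ hc'0] at hkc
    linarith
  constructor
  · -- lower bound
    have h1 := middle k hk8
    have h2 := split k hk8
    have hpows : (k : ℝ) ^ (n + 1) = (k : ℝ) ^ n * (k : ℝ) := pow_succ _ _
    calc c' / 2 * (k : ℝ) ^ (n + 1)
        ≤ c' * (k : ℝ) ^ (n + 1) - 2 * N * (K * (k : ℝ) ^ n) := by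
          rw [hpows]
          have := mul_le_mul_of_nonneg_right hkK hkn0
          nlinarith [this]
      _ ≤ (∑ ℓ ∈ Finset.Ico (k / 4) (k / 2), f ℓ * g (k - ℓ)) - 2 * N * (K * (k : ℝ) ^ n) := by
          linarith
      _ ≤ ∑ ℓ ∈ Finset.range (k + 1), f ℓ * g (k - ℓ) := h2
  · exact upper k hkN2
end

section
/- Let Γ be a finite connected graph with no bivalent vertices, let W be a subset of essential vertices with |W| > 1, and suppose W is not well-separating: some v ∈ W has its open star meeting only one connected component of the vertex explosion Γ_W. Then Δ_Γ^W < Δ_Γ^{|W|}; that is, W does not maximize the number of edge-components of Γ ∖ W among subsets of essential vertices of the same cardinality. Moreover, if |W| ≤ 1 and Δ_Γ^W = Δ_Γ^{|W|}, then either W is well-separating or |W| = Δ_Γ^{|W|} = 1. -/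
/-- A finite multigraph, modeled by half-edges: `V` is the vertex set, `H` the set
of half-edges, `vert` assigns to each half-edge its vertex, and `inv` is the
fixed-point-free involution pairing the two halves of each edge. -/
structure FGraph where
  V : Type
  H : Type
  [fV : Fintype V]
  [fH : Fintype H]
  [dV : DecidableEq V]
  [dH : DecidableEq H]
  vert : H → V
  inv : H → H
  inv_invol : ∀ h, inv (inv h) = h
  inv_ne : ∀ h, inv h ≠ h

attribute [instance] FGraph.fV FGraph.fH FGraph.dV FGraph.dH

namespace FGraph

/-- Two half-edges are identified if they are equal or paired by the involution. -/
def hsetoid (G : FGraph) : Setoid G.H :=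
  ⟨fun a b => b = a ∨ b = G.inv a, by
    constructor
    · exact fun a => Or.inl rfl
    · rintro a b (rfl | rfl)
      · exact Or.inl rfl
      · exact Or.inr (G.inv_invol a).symm
    · rintro a b c (rfl | rfl) (rfl | rfl) <;> simp [G.inv_invol] ⟩

/-- The set of edges: pairs of half-edges exchanged by the involution. -/
def Edge (G : FGraph) := Quotient G.hsetoid

/-- The edge containing a half-edge. -/
def edgeOf (G : FGraph) (h : G.H) : G.Edge := Quotient.mk G.hsetoid h

/-- The valence of a vertex: the number of half-edges at it (a self-loop counts
twice). -/
noncomputable def valence (G : FGraph) (v : G.V) : ℕ := Nat.card {h : G.H // G.vert h = v}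

/-- Incidence between a vertex and an edge. -/
def incid (G : FGraph) (v : G.V) (e : G.Edge) : Prop :=
  ∃ h, G.edgeOf h = e ∧ G.vert h = v

/-- The equivalence relation `∼_W` on edges: two edges are related iff they lie in
the same connected component of `Γ ∖ W`; generated by sharing a vertex not in `W`. -/
def wrel (G : FGraph) (W : Finset G.V) : G.Edge → G.Edge → Prop :=
  Relation.EqvGen fun e e' => ∃ u, u ∉ W ∧ G.incid u e ∧ G.incid u e'

/-- `Δ_Γ^W`: the number of equivalence classes of edges under `∼_W`. -/
noncomputable def DeltaW (G : FGraph) (W : Finset G.V) : ℕ :=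
  Nat.card (Quotient (⟨G.wrel W, Relation.EqvGen.is_equivalence _⟩ : Setoid G.Edge))

/-- `Δ_Γ^i`: the maximum of `Δ_Γ^W` over subsets `W` of essential vertices
(valence `≥ 3`) of cardinality `i`, with value `⊥ = -∞` if there is no such `W`. -/
noncomputable def Delta (G : FGraph) (i : ℕ) : WithBot ℕ :=
  (Finset.univ.filter fun W : Finset G.V =>
      W.card = i ∧ ∀ v ∈ W, 3 ≤ G.valence v).sup
    fun W => (G.DeltaW W : WithBot ℕ)

/-- Disjoint union of graphs. -/
def dsum (G₁ G₂ : FGraph) : FGraph where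
  V := G₁.V ⊕ G₂.V
  H := G₁.H ⊕ G₂.H
  vert := Sum.map G₁.vert G₂.vert ∘ fun h => h.map id id
  inv := Sum.map G₁.inv G₂.inv
  inv_invol := by rintro (h | h) <;> simp [G₁.inv_invol, G₂.inv_invol]
  inv_ne := by rintro (h | h) <;> simp [G₁.inv_ne, G₂.inv_ne]

end FGraph

namespace FGraph

/-- Adjacency of vertices: there is a half-edge from `a` whose partner is at `b`. -/
def adj (G : FGraph) (a b : G.V) : Prop :=
  ∃ h, G.vert h = a ∧ G.vert (G.inv h) = b

/-- A graph is connected if it is nonempty and any two vertices are joined by an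
edge path. -/
def Connected (G : FGraph) : Prop :=
  Nonempty G.V ∧ ∀ a b : G.V, Relation.EqvGen G.adj a b

/-- `W` is well-separating if the open star of each `v ∈ W` meets more than one
connected component of `Γ_W` (equivalently, of `Γ ∖ W`): there are two edges at
`v` lying in distinct components. -/
def WellSep (G : FGraph) (W : Finset G.V) : Prop :=
  ∀ v ∈ W, ∃ e e' : G.Edge, G.incid v e ∧ G.incid v e' ∧ ¬ G.wrel W e e'

end FGraph

namespace FGraph

variable (G : FGraph)

instance edgeFinite : Finite G.Edge := inferInstanceAs (Finite (Quotient G.hsetoid))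

lemma edgeOf_inv (h : G.H) : G.edgeOf (G.inv h) = G.edgeOf h :=
  Quotient.sound (Or.inr (G.inv_invol h).symm)

lemma other_half {h h' : G.H} (he : G.edgeOf h' = G.edgeOf h) : h' = h ∨ h' = G.inv h := by
  rcases Quotient.exact he with h1 | h1
  · exact Or.inl h1.symm
  · right; rw [h1, G.inv_invol]

lemma incid_edgeOf (h : G.H) : G.incid (G.vert h) (G.edgeOf h) := ⟨h, rfl, rfl⟩

lemma incid_edgeOf_inv (h : G.H) : G.incid (G.vert (G.inv h)) (G.edgeOf h) :=
  ⟨G.inv h, G.edgeOf_inv h, rfl⟩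

lemma half_of_val3 {x : G.V} (hx : 3 ≤ G.valence x) : ∃ h, G.vert h = x := by
  have : 0 < Nat.card {h : G.H // G.vert h = x} := lt_of_lt_of_le (by norm_num) hx
  obtain ⟨⟨h, hh⟩⟩ := (Nat.card_pos_iff.mp this).1
  exact ⟨h, hh⟩

lemma wrel_mono {S T : Finset G.V} (hsub : S ⊆ T) {e e' : G.Edge} (hw : G.wrel T e e') :
    G.wrel S e e' :=
  Relation.EqvGen.mono (fun a b hab => by
    obtain ⟨z, hz, i1, i2⟩ := hab
    exact ⟨z, fun hm => hz (hsub hm), i1, i2⟩) _ _ hw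

lemma wrel_isolated {T : Finset G.V} {e : G.Edge}
    (hconf : ∀ h, G.edgeOf h = e → G.vert h ∈ T) {e' : G.Edge} (hw : G.wrel T e e') :
    e' = e := by
  have key : ∀ a b, G.wrel T a b → (a = e → b = e) ∧ (b = e → a = e) := by
    intro a b hab
    induction hab with
    | rel a b hab =>
        obtain ⟨z, hz, ⟨h1, eh1, vh1⟩, ⟨h2, eh2, vh2⟩⟩ := hab
        constructor
        · rintro rfl; exact absurd (vh1 ▸ hconf h1 eh1) hz
        · rintro rfl; exact absurd (vh2 ▸ hconf h2 eh2) hz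
    | refl a => exact ⟨id, id⟩
    | symm a b _ ih => exact ⟨ih.2, ih.1⟩
    | trans a b c _ _ ih1 ih2 => exact ⟨fun ha => ih2.1 (ih1.1 ha), fun hc => ih1.2 (ih2.2 hc)⟩
  exact (key e e' hw).1 rfl

lemma two_edges {u : G.V} (hu3 : 3 ≤ G.valence u) :
    ∃ h₁ h₂ : G.H, G.vert h₁ = u ∧ G.vert h₂ = u ∧ G.edgeOf h₁ ≠ G.edgeOf h₂ := by
  classical
  obtain ⟨h₀, hh₀⟩ := G.half_of_val3 hu3
  by_contra hno
  push_neg at hno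
  have hinj : Function.Injective
      (fun x : {h : G.H // G.vert h = u} => if x.1 = h₀ then (0 : Fin 2) else 1) := by
    rintro ⟨x, hx⟩ ⟨y, hy⟩ hxy
    simp only at hxy
    have hx' : x = h₀ ∨ x = G.inv h₀ := G.other_half (hno x h₀ hx hh₀)
    have hy' : y = h₀ ∨ y = G.inv h₀ := G.other_half (hno y h₀ hy hh₀)
    by_cases hx0 : x = h₀ <;> by_cases hy0 : y = h₀ <;>
      simp [hx0, hy0] at hxy ⊢
    · exact (hx'.resolve_left hx0).trans (hy'.resolve_left hy0).symm
  have hle : Nat.card {h : G.H // G.vert h = u} ≤ Nat.card (Fin 2) :=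
    Nat.card_le_card_of_injective _ hinj
  have h3 : 3 ≤ Nat.card {h : G.H // G.vert h = u} := hu3
  rw [show Nat.card (Fin 2) = 2 by simp] at hle
  omega

lemma card_lt_of_surj {α β : Type} [Finite α] (f : α → β) (hf : Function.Surjective f)
    {a b : α} (hab : f a = f b) (hne : a ≠ b) : Nat.card β < Nat.card α := by
  classical
  have : Finite β := Finite.of_surjective f hf
  cases nonempty_fintype α
  cases nonempty_fintype β
  rw [Nat.card_eq_fintype_card, Nat.card_eq_fintype_card]
  exact Fintype.card_lt_of_surjective_not_injective f hf (fun hinj => hne (hinj hab))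

lemma deltaW_lt_insert {S : Finset G.V} {u : G.V} (hu3 : 3 ≤ G.valence u) (huS : u ∉ S)
    (hadj : ∃ h, G.vert h = u ∧ G.vert (G.inv h) ∈ S) :
    G.DeltaW S < G.DeltaW (insert u S) := by
  classical
  obtain ⟨h₀, hv₀, hw₀⟩ := hadj
  set T := insert u S with hT
  have huT : u ∈ T := Finset.mem_insert_self u S
  have hconf_of : ∀ h : G.H, G.vert h ∈ T → G.vert (G.inv h) ∈ T →
      ∀ h', G.edgeOf h' = G.edgeOf h → G.vert h' ∈ T := by
    intro h ha hb h' he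
    rcases G.other_half he with rfl | rfl
    · exact ha
    · exact hb
  have hmain : ∃ e₁ e₂ : G.Edge, G.incid u e₁ ∧ G.incid u e₂ ∧
      (∀ h, G.edgeOf h = e₁ → G.vert h ∈ T) ∧ e₁ ≠ e₂ := by
    by_cases hall : ∀ h, G.vert h = u → G.vert (G.inv h) ∈ T
    · obtain ⟨h₁, h₂, hv1, hv2, hne⟩ := G.two_edges hu3
      refine ⟨_, _, ⟨h₁, rfl, hv1⟩, ⟨h₂, rfl, hv2⟩,
        hconf_of h₁ (by rw [hv1]; exact huT) (hall h₁ hv1), hne⟩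
    · push_neg at hall
      obtain ⟨hs, hvs, hns⟩ := hall
      have hconf : ∀ h', G.edgeOf h' = G.edgeOf h₀ → G.vert h' ∈ T :=
        hconf_of h₀ (by rw [hv₀]; exact huT) (Finset.mem_insert_of_mem hw₀)
      refine ⟨G.edgeOf h₀, G.edgeOf hs, ⟨h₀, rfl, hv₀⟩, ⟨hs, rfl, hvs⟩, hconf, ?_⟩
      intro heq
      exact hns (hconf (G.inv hs) (by rw [G.edgeOf_inv]; exact heq.symm))
  obtain ⟨e₁, e₂, hi1, hi2, hconf, hne⟩ := hmain
  have hrelS : G.wrel S e₁ e₂ := Relation.EqvGen.rel _ _ ⟨u, huS, hi1, hi2⟩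
  have hnrelT : ¬ G.wrel T e₁ e₂ := fun hw => hne (G.wrel_isolated hconf hw).symm
  let sS : Setoid G.Edge := ⟨G.wrel S, Relation.EqvGen.is_equivalence _⟩
  let sT : Setoid G.Edge := ⟨G.wrel T, Relation.EqvGen.is_equivalence _⟩
  let f : Quotient sT → Quotient sS :=
    fun x => Quotient.liftOn x (fun e => Quotient.mk sS e)
      (fun a b h => Quotient.sound (G.wrel_mono (Finset.subset_insert u S) h))
  have hf : Function.Surjective f := fun y => by
    obtain ⟨e, rfl⟩ := Quotient.exists_rep y
    exact ⟨Quotient.mk sT e, rfl⟩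
  have hfe : f (Quotient.mk sT e₁) = f (Quotient.mk sT e₂) := Quotient.sound hrelS
  have hneq : (Quotient.mk sT e₁) ≠ (Quotient.mk sT e₂) :=
    fun h => hnrelT (Quotient.exact h)
  exact card_lt_of_surj f hf hfe hneq

lemma wrel_erase_iff {W : Finset G.V} {v : G.V}
    (hall : ∀ e e', G.incid v e → G.incid v e' → G.wrel W e e') :
    ∀ e e', G.wrel (W.erase v) e e' ↔ G.wrel W e e' := by
  classical
  intro e e'
  constructor
  · intro hw
    induction hw with
    | rel a b hab =>
        obtain ⟨z, hz, i1, i2⟩ := hab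
        by_cases hzW : z ∈ W
        · have hzv : z = v := by
            by_contra hne
            exact hz (Finset.mem_erase.mpr ⟨hne, hzW⟩)
          subst hzv
          exact hall a b i1 i2
        · exact Relation.EqvGen.rel _ _ ⟨z, hzW, i1, i2⟩
    | refl a => exact Relation.EqvGen.refl a
    | symm a b _ ih => exact Relation.EqvGen.symm _ _ ih
    | trans a b c _ _ ih1 ih2 => exact Relation.EqvGen.trans _ _ _ ih1 ih2
  · exact G.wrel_mono (Finset.erase_subset v W)

lemma deltaW_congr {S T : Finset G.V} (h : ∀ e e', G.wrel S e e' ↔ G.wrel T e e') :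
    G.DeltaW S = G.DeltaW T := by
  have hs : (⟨G.wrel S, Relation.EqvGen.is_equivalence _⟩ : Setoid G.Edge) =
      ⟨G.wrel T, Relation.EqvGen.is_equivalence _⟩ := Setoid.ext h
  unfold DeltaW
  rw [hs]

lemma has_half_iff {a b : G.V} (hab : Relation.EqvGen G.adj a b) :
    (∃ h, G.vert h = a) ↔ (∃ h, G.vert h = b) := by
  induction hab with
  | rel a b h =>
      obtain ⟨h₀, h1, h2⟩ := h
      exact iff_of_true ⟨h₀, h1⟩ ⟨_, h2⟩
  | refl a => exact Iff.rfl
  | symm _ _ _ ih => exact ih.symm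
  | trans _ _ _ _ _ ih1 ih2 => exact ih1.trans ih2

lemma wrel_empty_of_reach {a b : G.V} (hab : Relation.EqvGen G.adj a b) :
    ∀ e e', G.incid a e → G.incid b e' → G.wrel (∅ : Finset G.V) e e' := by
  induction hab with
  | rel a b h =>
      obtain ⟨h₀, ha, hb⟩ := h
      intro e e' i1 i2
      have r1 : G.wrel (∅ : Finset G.V) e (G.edgeOf h₀) :=
        Relation.EqvGen.rel _ _ ⟨a, Finset.notMem_empty a, i1, ⟨h₀, rfl, ha⟩⟩
      have r2 : G.wrel (∅ : Finset G.V) (G.edgeOf h₀) e' :=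
        Relation.EqvGen.rel _ _ ⟨b, Finset.notMem_empty b, ⟨G.inv h₀, G.edgeOf_inv h₀, hb⟩, i2⟩
      exact Relation.EqvGen.trans _ _ _ r1 r2
  | refl a =>
      intro e e' i1 i2
      exact Relation.EqvGen.rel _ _ ⟨a, Finset.notMem_empty a, i1, i2⟩
  | symm a b hab ih =>
      intro e e' i1 i2
      exact Relation.EqvGen.symm _ _ (ih e' e i2 i1)
  | trans a b c hab hbc ih1 ih2 =>
      intro e e' i1 i2
      have hae : ∃ h, G.vert h = a := by
        obtain ⟨h, -, hv⟩ := i1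
        exact ⟨h, hv⟩
      obtain ⟨hb, hvb⟩ := (G.has_half_iff hab).mp hae
      have ib : G.incid b (G.edgeOf hb) := ⟨hb, rfl, hvb⟩
      exact Relation.EqvGen.trans _ _ _ (ih1 e _ i1 ib) (ih2 _ e' ib i2)

lemma wrel_empty_all (hconn : G.Connected) (e e' : G.Edge) :
    G.wrel (∅ : Finset G.V) e e' := by
  obtain ⟨h, rfl⟩ := Quotient.exists_rep e
  obtain ⟨h', rfl⟩ := Quotient.exists_rep e'
  exact G.wrel_empty_of_reach (hconn.2 (G.vert h) (G.vert h'))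
    _ _ (G.incid_edgeOf h) (G.incid_edgeOf h')

lemma deltaW_empty (hconn : G.Connected) (hne : Nonempty G.H) :
    G.DeltaW (∅ : Finset G.V) = 1 := by
  obtain ⟨h⟩ := hne
  unfold DeltaW
  rw [Nat.card_eq_one_iff_unique]
  constructor
  · constructor
    intro x y
    obtain ⟨a, rfl⟩ := Quotient.exists_rep x
    obtain ⟨b, rfl⟩ := Quotient.exists_rep y
    exact Quotient.sound (G.wrel_empty_all hconn a b)
  · exact ⟨Quotient.mk _ (G.edgeOf h)⟩

lemma exists_good (hconn : G.Connected) (hsmooth : ∀ x, G.valence x ≠ 2)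
    {S : Finset G.V} {v w : G.V} (hv3 : 3 ≤ G.valence v) (hvS : v ∉ S)
    (hw : w ∈ S) (hw3 : 3 ≤ G.valence w) :
    ∃ u, 3 ≤ G.valence u ∧ u ∉ S ∧ ∃ h, G.vert h = u ∧ G.vert (G.inv h) ∈ S := by
  classical
  set target := ∃ u, 3 ≤ G.valence u ∧ u ∉ S ∧ ∃ h, G.vert h = u ∧ G.vert (G.inv h) ∈ S
    with htarget
  obtain ⟨hv, hvv⟩ := G.half_of_val3 hv3
  obtain ⟨hww, hwv⟩ := G.half_of_val3 hw3
  set egood := fun e : G.Edge =>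
    ∃ h, G.edgeOf h = e ∧ G.vert h ∉ S ∧ 3 ≤ G.valence (G.vert h) with hegood
  -- if an edge is egood and also touches S, we get the target
  have endcase : ∀ (e : G.Edge) (hA : G.H), G.edgeOf hA = e → G.vert hA ∈ S →
      egood e → target := by
    intro e hA heA hvA hg
    obtain ⟨h, he, hnS, h3⟩ := hg
    have : h = hA ∨ h = G.inv hA := G.other_half (he.trans heA.symm)
    rcases this with rfl | rfl
    · exact absurd hvA hnS
    · exact ⟨G.vert (G.inv hA), h3, hnS, G.inv hA, rfl, by rw [G.inv_invol]; exact hvA⟩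
  have key : ∀ e e', G.wrel (∅ : Finset G.V) e e' →
      (egood e → egood e' ∨ target) ∧ (egood e' → egood e ∨ target) := by
    intro e e' hw
    induction hw with
    | rel a b hab =>
        obtain ⟨z, _, ⟨h1, eh1, vh1⟩, ⟨h2, eh2, vh2⟩⟩ := hab
        by_cases hz : z ∈ S
        · constructor
          · intro hg; exact Or.inr (endcase a h1 eh1 (vh1 ▸ hz) hg)
          · intro hg; exact Or.inr (endcase b h2 eh2 (vh2 ▸ hz) hg)
        · constructor
          · intro hg
            by_cases heq : a = b
            · exact Or.inl (heq ▸ hg)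
            · left
              refine ⟨h2, eh2, by rw [vh2]; exact hz, ?_⟩
              rw [vh2]
              have hne12 : h1 ≠ h2 := by
                intro hh; exact heq (eh1 ▸ eh2 ▸ congrArg G.edgeOf hh)
              have : Nontrivial {h : G.H // G.vert h = z} :=
                ⟨⟨h1, vh1⟩, ⟨h2, vh2⟩, by simp [hne12]⟩
              have h2le : 1 < Nat.card {h : G.H // G.vert h = z} :=
                Finite.one_lt_card_iff_nontrivial.mpr this
              have := hsmooth z
              unfold valence at this ⊢
              omega
          · intro hg
            by_cases heq : a = b
            · exact Or.inl (heq ▸ hg)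
            · left
              refine ⟨h1, eh1, by rw [vh1]; exact hz, ?_⟩
              rw [vh1]
              have hne12 : h1 ≠ h2 := by
                intro hh; exact heq (eh1 ▸ eh2 ▸ congrArg G.edgeOf hh)
              have : Nontrivial {h : G.H // G.vert h = z} :=
                ⟨⟨h1, vh1⟩, ⟨h2, vh2⟩, by simp [hne12]⟩
              have h2le : 1 < Nat.card {h : G.H // G.vert h = z} :=
                Finite.one_lt_card_iff_nontrivial.mpr this
              have := hsmooth z
              unfold valence at this ⊢
              omega
    | refl a => exact ⟨fun hg => Or.inl hg, fun hg => Or.inl hg⟩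
    | symm a b _ ih => exact ⟨ih.2, ih.1⟩
    | trans a b c _ _ ih1 ih2 =>
        constructor
        · intro hg
          rcases ih1.1 hg with hg' | ht
          · exact ih2.1 hg'
          · exact Or.inr ht
        · intro hg
          rcases ih2.2 hg with hg' | ht
          · exact ih1.2 hg'
          · exact Or.inr ht
  have hrel : G.wrel (∅ : Finset G.V) (G.edgeOf hv) (G.edgeOf hww) :=
    G.wrel_empty_all hconn _ _
  have hgv : egood (G.edgeOf hv) :=
    ⟨hv, rfl, by rw [hvv]; exact hvS, by rw [hvv]; exact hv3⟩
  rcases (key _ _ hrel).1 hgv with hg | ht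
  · exact endcase (G.edgeOf hww) hww rfl (by rw [hwv]; exact hw) hg
  · exact ht

end FGraph


/-- Let `Γ` be a finite connected smooth graph (no bivalent vertices) with at least
one essential vertex, and let `W` be a set of essential vertices.  If `|W| > 1` and
`W` is not well-separating, then `Δ_Γ^W < Δ_Γ^{|W|}`, i.e. `W` does not maximize
the number of edge components of `Γ ∖ W` among sets of essential vertices of the
same cardinality.  Moreover if `|W| ≤ 1` and `Δ_Γ^W = Δ_Γ^{|W|}`, then either `W`
is well-separating or `|W| = Δ_Γ^{|W|} = 1`. -/
theorem not_max_of_not_wellSeparating (G : FGraph)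
    (hconn : G.Connected)
    (hsmooth : ∀ v : G.V, G.valence v ≠ 2)
    (hess : ∃ v : G.V, 3 ≤ G.valence v)
    (W : Finset G.V) (hW : ∀ v ∈ W, 3 ≤ G.valence v) :
    (1 < W.card → ¬ G.WellSep W →
      (G.DeltaW W : WithBot ℕ) < G.Delta W.card) ∧
    (W.card ≤ 1 → (G.DeltaW W : WithBot ℕ) = G.Delta W.card →
      (G.WellSep W ∨ (W.card = 1 ∧ G.Delta W.card = 1))) := by
  classical
  constructor
  · intro hcard hns
    unfold FGraph.WellSep at hns
    push_neg at hns
    obtain ⟨v, hvW, hall⟩ := hns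
    have hv3 := hW v hvW
    set S := W.erase v with hS
    have hSne : S.Nonempty := by
      rw [← Finset.card_pos, hS, Finset.card_erase_of_mem hvW]; omega
    obtain ⟨w, hwS⟩ := hSne
    have hw3 := hW w (Finset.mem_of_mem_erase hwS)
    have hvS : v ∉ S := Finset.notMem_erase v W
    obtain ⟨u, hu3, huS, hadj⟩ := G.exists_good hconn hsmooth hv3 hvS hwS hw3
    have hlt : G.DeltaW S < G.DeltaW (insert u S) := G.deltaW_lt_insert hu3 huS hadj
    have heqd : G.DeltaW W = G.DeltaW S :=
      (G.deltaW_congr (fun e e' => G.wrel_erase_iff hall e e')).symm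
    have hmem : insert u S ∈ Finset.univ.filter (fun W' : Finset G.V =>
        W'.card = W.card ∧ ∀ x ∈ W', 3 ≤ G.valence x) := by
      rw [Finset.mem_filter]
      refine ⟨Finset.mem_univ _, ?_, ?_⟩
      · rw [Finset.card_insert_of_notMem huS, hS, Finset.card_erase_of_mem hvW]
        omega
      · intro x hx
        rcases Finset.mem_insert.mp hx with rfl | hx'
        · exact hu3
        · exact hW x (Finset.mem_of_mem_erase hx')
    have hle : ((G.DeltaW (insert u S) : ℕ) : WithBot ℕ) ≤ G.Delta W.card := by
      unfold FGraph.Delta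
      exact Finset.le_sup (f := fun W' : Finset G.V => ((G.DeltaW W' : ℕ) : WithBot ℕ)) hmem
    calc ((G.DeltaW W : ℕ) : WithBot ℕ) = ((G.DeltaW S : ℕ) : WithBot ℕ) := by rw [heqd]
      _ < ((G.DeltaW (insert u S) : ℕ) : WithBot ℕ) := by exact_mod_cast hlt
      _ ≤ G.Delta W.card := hle
  · intro hcard hdelta
    by_cases hws : G.WellSep W
    · exact Or.inl hws
    · rcases Nat.lt_or_ge W.card 1 with h0 | h1
      · exfalso
        apply hws
        intro x hx
        have hWe : W = ∅ := Finset.card_eq_zero.mp (by omega)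
        rw [hWe] at hx
        exact absurd hx (Finset.notMem_empty x)
      · have hcard1 : W.card = 1 := le_antisymm hcard h1
        right
        refine ⟨hcard1, ?_⟩
        unfold FGraph.WellSep at hws
        push_neg at hws
        obtain ⟨v, hvW, hall⟩ := hws
        have herase : W.erase v = ∅ := by
          obtain ⟨a, rfl⟩ := Finset.card_eq_one.mp hcard1
          rcases Finset.mem_singleton.mp hvW with rfl
          simp
        have hne : Nonempty G.H := by
          obtain ⟨x, hx3⟩ := hess
          obtain ⟨h, _⟩ := G.half_of_val3 hx3
          exact ⟨h⟩
        have h1' : G.DeltaW W = 1 := by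
          have hcg := G.deltaW_congr (fun e e' => G.wrel_erase_iff hall e e')
          rw [herase] at hcg
          rw [← hcg]
          exact G.deltaW_empty hconn hne
        rw [← hdelta, h1']
        norm_num
end
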